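/- For every z in the unit sphere S^{2m−1} ⊂ ℂ^m and all indices with 1 ≤ p < l ≤ m−1 and p ≤ m−2: ⟨[Y_l, W_p](z), X(z)⟩ = 2·|z_l|²·θ_p·|z_p|²·Σ_{k=l+1}^m (θ_l² − θ_k²)·|z_k|². -/

import Mathlib

open scoped BigOperators ComplexConjugate

/-- The real inner product on `ℂ^m`: `⟨v,w⟩ = Re ∑_k v_k · conj (w_k)`. -/
noncomputable def rinner {m : ℕ} (v w : Fin m → ℂ) : ℝ :=
  (∑ k : Fin m, v k * conj (w k)).re

/-- The vector field `X(z) = (iθ₁z₁,…,iθ_m z_m)` generating the flow. -/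
noncomputable def sphX {m : ℕ} (θ : Fin m → ℝ) (z : Fin m → ℂ) : Fin m → ℂ :=
  fun k => Complex.I * (θ k : ℂ) * z k

/-- The vector field `Y_l` (here `l` is a 0-based index; the paper's `Y_l` for
`1 ≤ l ≤ m−1` corresponds to indices `l` with `(l:ℕ)+1 < m`): its components are `0` below `l`,
`−(∑_{k>l}|z_k|²)·z_l` at `l`, and `|z_l|²·z_k` above `l`. -/
noncomputable def sphY {m : ℕ} (l : Fin m) (z : Fin m → ℂ) : Fin m → ℂ := fun k =>
  if (k : ℕ) < (l : ℕ) then 0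
  else if k = l then
    -(((∑ j ∈ Finset.univ.filter (fun j : Fin m => (l : ℕ) < (j : ℕ)), ‖z j‖ ^ 2 : ℝ) : ℂ)) * z l
  else ((‖z l‖ ^ 2 : ℝ) : ℂ) * z k

/-- The generic vector field `W_p` (0-based index `p`; the paper's `W_p` for `1 ≤ p ≤ m−2`
corresponds to indices `p` with `(p:ℕ)+2 < m`): components `0` below `p`,
`−(∑_{k>p}θ_k²|z_k|²)·i z_p` at `p`, and `θ_p θ_k |z_p|²·i z_k` above `p`. -/
noncomputable def sphW {m : ℕ} (θ : Fin m → ℝ) (p : Fin m) (z : Fin m → ℂ) : Fin m → ℂ := fun k =>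
  if (k : ℕ) < (p : ℕ) then 0
  else if k = p then
    -(((∑ j ∈ Finset.univ.filter (fun j : Fin m => (p : ℕ) < (j : ℕ)),
        (θ j) ^ 2 * ‖z j‖ ^ 2 : ℝ) : ℂ)) * (Complex.I * z p)
  else (((θ p) * (θ k) * ‖z p‖ ^ 2 : ℝ) : ℂ) * (Complex.I * z k)

/-- The special last vector field `W_{m−1}`, with `a` the index `m−2` and `b` the index `m−1`
(0-based): component `−θ_b|z_b|²·i z_a` at `a`, `θ_a|z_a|²·i z_b` at `b`, and `0` elsewhere. -/
noncomputable def sphWlast {m : ℕ} (θ : Fin m → ℝ) (a b : Fin m) (z : Fin m → ℂ) :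
    Fin m → ℂ := fun k =>
  if k = a then -(((θ b * ‖z b‖ ^ 2 : ℝ)) : ℂ) * (Complex.I * z a)
  else if k = b then (((θ a * ‖z a‖ ^ 2 : ℝ)) : ℂ) * (Complex.I * z b)
  else 0

/-- The full family `W_p`, `1 ≤ p ≤ m−1` (0-based: `(p:ℕ)+1 < m`): the generic `W_p` for
`p ≤ m−2` and the special `W_{m−1}` for the last index. -/
noncomputable def sphWfull {m : ℕ} (hm : 2 ≤ m) (θ : Fin m → ℝ) (p : Fin m) :
    (Fin m → ℂ) → (Fin m → ℂ) :=
  if (p : ℕ) = m - 2 then sphWlast θ ⟨m - 2, by omega⟩ ⟨m - 1, by omega⟩ else sphW θ p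

/-- The Lie bracket `[U,V](z) = (DV)_z(U(z)) − (DU)_z(V(z))` of vector fields on `ℂ^m`,
`D` being the Fréchet derivative over `ℝ`. -/
noncomputable def bracket {m : ℕ} (U V : (Fin m → ℂ) → (Fin m → ℂ)) (z : Fin m → ℂ) :
    Fin m → ℂ :=
  fderiv ℝ V z (U z) - fderiv ℝ U z (V z)

/-! ### Auxiliary derivative machinery -/

section aux
open ContinuousLinearMap

noncomputable def dconj {m : ℕ} (j : Fin m) : (Fin m → ℂ) →L[ℝ] ℂ :=
  Complex.conjCLE.toContinuousLinearMap.comp (proj j)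

@[simp] lemma dconj_apply {m : ℕ} (j : Fin m) (v : Fin m → ℂ) : dconj j v = conj (v j) := rfl

lemma norm_sq_cast (w : ℂ) : ((‖w‖^2 : ℝ) : ℂ) = w * conj w := by
  rw [Complex.mul_conj]
  norm_cast
  simp [Complex.normSq_eq_norm_sq]

lemma mul_conj'' (w : ℂ) : w * conj w = ((‖w‖^2 : ℝ) : ℂ) := (norm_sq_cast w).symm

lemma conj_mul'' (w : ℂ) : conj w * w = ((‖w‖^2 : ℝ) : ℂ) := by rw [mul_comm]; exact mul_conj'' w

lemma mul_conj_norm (w : ℂ) : w * conj w = ((‖w‖ : ℝ) : ℂ)^2 := by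
  rw [mul_conj'']; push_cast; ring

lemma hasF_sq {m : ℕ} (z : Fin m → ℂ) (j : Fin m) :
    HasFDerivAt (fun z : Fin m → ℂ => ((‖z j‖^2 : ℝ) : ℂ))
      (z j • dconj j + (conj (z j)) • (proj j : (Fin m → ℂ) →L[ℝ] ℂ)) z := by
  have h1 : HasFDerivAt (fun z : Fin m → ℂ => z j) (proj j : (Fin m → ℂ) →L[ℝ] ℂ) z :=
    hasFDerivAt_apply j z
  have h2 : HasFDerivAt (fun z : Fin m → ℂ => conj (z j)) (dconj j) z :=
    (Complex.conjCLE.toContinuousLinearMap.hasFDerivAt).comp z h1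
  have h3 := h1.mul h2
  simp only [norm_sq_cast]
  exact h3

lemma hasF_sumC {m : ℕ} (c : Fin m → ℝ) (S : Finset (Fin m)) (z : Fin m → ℂ) :
    HasFDerivAt (fun z : Fin m → ℂ => ((∑ j ∈ S, c j * ‖z j‖^2 : ℝ) : ℂ))
      (∑ j ∈ S, ((c j : ℝ) : ℂ) •
        (z j • dconj j + (conj (z j)) • (proj j : (Fin m → ℂ) →L[ℝ] ℂ))) z := by
  simp only [Complex.ofReal_sum, Complex.ofReal_mul]
  exact HasFDerivAt.fun_sum fun j _ => ((hasF_sq z j).const_mul _)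

lemma hasF_sumY {m : ℕ} (S : Finset (Fin m)) (z : Fin m → ℂ) :
    HasFDerivAt (fun z : Fin m → ℂ => ((∑ j ∈ S, ‖z j‖^2 : ℝ) : ℂ))
      (∑ j ∈ S, (z j • dconj j + (conj (z j)) • (proj j : (Fin m → ℂ) →L[ℝ] ℂ))) z := by
  simp only [Complex.ofReal_sum]
  exact HasFDerivAt.fun_sum fun j _ => hasF_sq z j

variable {m : ℕ} (z v : Fin m → ℂ)

lemma hasF_W_p (c : Fin m → ℝ) (S : Finset (Fin m)) (p : Fin m) :
    HasFDerivAt (fun x : Fin m → ℂ =>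
        -(((∑ j ∈ S, c j * ‖x j‖^2 : ℝ) : ℂ)) * (Complex.I * x p))
      ((-(((∑ j ∈ S, c j * ‖z j‖^2 : ℝ) : ℂ))) • (Complex.I • (proj p : (Fin m → ℂ) →L[ℝ] ℂ))
        + (Complex.I * z p) • (-(∑ j ∈ S, ((c j : ℝ) : ℂ) •
            (z j • dconj j + (conj (z j)) • (proj j : (Fin m → ℂ) →L[ℝ] ℂ))))) z := by
  exact ((hasF_sumC c S z).neg).mul ((hasFDerivAt_apply p z).const_mul Complex.I)

lemma fderiv_W_apply_p (c : Fin m → ℝ) (S : Finset (Fin m)) (p : Fin m) :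
    fderiv ℝ (fun x : Fin m → ℂ =>
        -(((∑ j ∈ S, c j * ‖x j‖^2 : ℝ) : ℂ)) * (Complex.I * x p)) z v
      = -(((∑ j ∈ S, c j * ‖z j‖^2 : ℝ) : ℂ)) * (Complex.I * v p)
        + (Complex.I * z p) *
            (-(∑ j ∈ S, ((c j : ℝ) : ℂ) * (z j * conj (v j) + conj (z j) * v j))) := by
  rw [(hasF_W_p z c S p).fderiv]
  simp [mul_add, Finset.mul_sum, mul_comm, mul_left_comm]

lemma hasF_W_gt (c : ℝ) (p k : Fin m) :
    HasFDerivAt (fun x : Fin m → ℂ => ((c * ‖x p‖^2 : ℝ) : ℂ) * (Complex.I * x k))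
      ((((c * ‖z p‖^2 : ℝ) : ℂ)) • (Complex.I • (proj k : (Fin m → ℂ) →L[ℝ] ℂ))
        + (Complex.I * z k) • (((c : ℝ) : ℂ) •
            (z p • dconj p + (conj (z p)) • (proj p : (Fin m → ℂ) →L[ℝ] ℂ)))) z := by
  have hc : HasFDerivAt (fun x : Fin m → ℂ => ((c * ‖x p‖^2 : ℝ) : ℂ))
      (((c : ℝ) : ℂ) • (z p • dconj p + (conj (z p)) • (proj p : (Fin m → ℂ) →L[ℝ] ℂ))) z := by
    simp only [Complex.ofReal_mul]
    exact (hasF_sq z p).const_mul _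
  have h := hc.mul ((hasFDerivAt_apply k z).const_mul Complex.I)
  exact h

lemma fderiv_W_apply_gt (c : ℝ) (p k : Fin m) :
    fderiv ℝ (fun x : Fin m → ℂ => ((c * ‖x p‖^2 : ℝ) : ℂ) * (Complex.I * x k)) z v
      = ((c * ‖z p‖^2 : ℝ) : ℂ) * (Complex.I * v k)
        + (Complex.I * z k) * (((c : ℝ) : ℂ) * (z p * conj (v p) + conj (z p) * v p)) := by
  rw [(hasF_W_gt z c p k).fderiv]
  simp [mul_add, mul_comm, mul_left_comm]

lemma hasF_Y_l (S : Finset (Fin m)) (l : Fin m) :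
    HasFDerivAt (fun x : Fin m → ℂ => -(((∑ j ∈ S, ‖x j‖^2 : ℝ) : ℂ)) * x l)
      ((-(((∑ j ∈ S, ‖z j‖^2 : ℝ) : ℂ))) • (proj l : (Fin m → ℂ) →L[ℝ] ℂ)
        + z l • (-(∑ j ∈ S,
            (z j • dconj j + (conj (z j)) • (proj j : (Fin m → ℂ) →L[ℝ] ℂ))))) z :=
  ((hasF_sumY S z).neg).mul (hasFDerivAt_apply l z)

lemma fderiv_Y_apply_l (S : Finset (Fin m)) (l : Fin m) :
    fderiv ℝ (fun x : Fin m → ℂ => -(((∑ j ∈ S, ‖x j‖^2 : ℝ) : ℂ)) * x l) z v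
      = -(((∑ j ∈ S, ‖z j‖^2 : ℝ) : ℂ)) * v l
        + z l * (-(∑ j ∈ S, (z j * conj (v j) + conj (z j) * v j))) := by
  rw [(hasF_Y_l z S l).fderiv]
  simp [mul_add, mul_comm, mul_left_comm]

lemma hasF_Y_gt (l k : Fin m) :
    HasFDerivAt (fun x : Fin m → ℂ => ((‖x l‖^2 : ℝ) : ℂ) * x k)
      ((((‖z l‖^2 : ℝ) : ℂ)) • (proj k : (Fin m → ℂ) →L[ℝ] ℂ)
        + z k • (z l • dconj l + (conj (z l)) • (proj l : (Fin m → ℂ) →L[ℝ] ℂ))) z :=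
  (hasF_sq z l).mul (hasFDerivAt_apply k z)

lemma fderiv_Y_apply_gt (l k : Fin m) :
    fderiv ℝ (fun x : Fin m → ℂ => ((‖x l‖^2 : ℝ) : ℂ) * x k) z v
      = ((‖z l‖^2 : ℝ) : ℂ) * v k + z k * (z l * conj (v l) + conj (z l) * v l) := by
  rw [(hasF_Y_gt z l k).fderiv]
  simp [mul_add, mul_comm, mul_left_comm]

end aux

/-! ### Component descriptions -/

section comps
variable {m : ℕ} (θ : Fin m → ℝ) (p l : Fin m)

lemma sphW_lt {k : Fin m} (h : (k:ℕ) < (p:ℕ)) :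
    (fun x : Fin m → ℂ => sphW θ p x k) = fun _ => 0 := by
  funext x; simp [sphW, h]

lemma sphW_eq : (fun x : Fin m → ℂ => sphW θ p x p)
    = fun x => -(((∑ j ∈ Finset.univ.filter (fun j : Fin m => (p : ℕ) < (j : ℕ)),
        (θ j) ^ 2 * ‖x j‖ ^ 2 : ℝ) : ℂ)) * (Complex.I * x p) := by
  funext x; simp [sphW]

lemma sphW_gt {k : Fin m} (h : (p:ℕ) < (k:ℕ)) : (fun x : Fin m → ℂ => sphW θ p x k)
    = fun x => (((θ p) * (θ k) * ‖x p‖ ^ 2 : ℝ) : ℂ) * (Complex.I * x k) := by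
  have h1 : ¬ ((k:ℕ) < (p:ℕ)) := by omega
  have h2 : ¬ (k = p) := by intro e; subst e; omega
  funext x; simp [sphW, h1, h2]

lemma sphY_lt {k : Fin m} (h : (k:ℕ) < (l:ℕ)) :
    (fun x : Fin m → ℂ => sphY l x k) = fun _ => 0 := by
  funext x; simp [sphY, h]

lemma sphY_eq : (fun x : Fin m → ℂ => sphY l x l)
    = fun x => -(((∑ j ∈ Finset.univ.filter (fun j : Fin m => (l : ℕ) < (j : ℕ)),
        ‖x j‖ ^ 2 : ℝ) : ℂ)) * x l := by
  funext x; simp [sphY]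

lemma sphY_gt {k : Fin m} (h : (l:ℕ) < (k:ℕ)) : (fun x : Fin m → ℂ => sphY l x k)
    = fun x => ((‖x l‖ ^ 2 : ℝ) : ℂ) * x k := by
  have h1 : ¬ ((k:ℕ) < (l:ℕ)) := by omega
  have h2 : ¬ (k = l) := by intro e; subst e; omega
  funext x; simp [sphY, h1, h2]

end comps

/-- For `z` on the unit sphere and `1 ≤ p < l ≤ m−1` with `p ≤ m−2`
(0-based: `p < l`, `(l:ℕ)+1 < m`, `(p:ℕ)+2 < m`),
`⟨[Y_l, W_p](z), X(z)⟩ = 2|z_l|²θ_p|z_p|²∑_{k>l}(θ_l²−θ_k²)|z_k|²`. -/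
theorem stmt14 {m : ℕ} (hm : 2 ≤ m) (θ : Fin m → ℝ) (hθ1 : θ ⟨0, by omega⟩ = 1)
    (hmono : Monotone θ) (z : Fin m → ℂ) (hz : ∑ k : Fin m, ‖z k‖ ^ 2 = 1)
    (p l : Fin m) (hpl : p < l) (hl : (l : ℕ) + 1 < m) (hp : (p : ℕ) + 2 < m) :
    rinner (bracket (sphY l) (sphW θ p) z) (sphX θ z)
      = 2 * ‖z l‖ ^ 2 * θ p * ‖z p‖ ^ 2
          * (∑ k ∈ Finset.univ.filter (fun k : Fin m => (l : ℕ) < (k : ℕ)),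
              ((θ l) ^ 2 - (θ k) ^ 2) * ‖z k‖ ^ 2) := by
  have hpl' : (p:ℕ) < (l:ℕ) := hpl
  set S : Finset (Fin m) := Finset.univ.filter (fun j : Fin m => (l : ℕ) < (j : ℕ)) with hS
  set Sp : Finset (Fin m) := Finset.univ.filter (fun j : Fin m => (p : ℕ) < (j : ℕ)) with hSp
  -- differentiability of all components
  have hdiffW : ∀ k, DifferentiableAt ℝ (fun x : Fin m → ℂ => sphW θ p x k) z := by
    intro k
    rcases lt_trichotomy (k:ℕ) (p:ℕ) with h|h|h
    · rw [sphW_lt θ p h]; exact differentiableAt_const 0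
    · have hk : k = p := Fin.ext h
      subst hk
      rw [sphW_eq]
      exact (hasF_W_p z (fun j => θ j ^ 2) Sp k).differentiableAt
    · rw [sphW_gt θ p h]
      exact (hasF_W_gt z (θ p * θ k) p k).differentiableAt
  have hdiffY : ∀ k, DifferentiableAt ℝ (fun x : Fin m → ℂ => sphY l x k) z := by
    intro k
    rcases lt_trichotomy (k:ℕ) (l:ℕ) with h|h|h
    · rw [sphY_lt l h]; exact differentiableAt_const 0
    · have hk : k = l := Fin.ext h
      subst hk
      rw [sphY_eq]
      exact (hasF_Y_l z S k).differentiableAt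
    · rw [sphY_gt l h]
      exact (hasF_Y_gt z l k).differentiableAt
  have hW : fderiv ℝ (sphW θ p) z
      = ContinuousLinearMap.pi (fun k => fderiv ℝ (fun x : Fin m → ℂ => sphW θ p x k) z) :=
    fderiv_pi hdiffW
  have hY : fderiv ℝ (sphY l) z
      = ContinuousLinearMap.pi (fun k => fderiv ℝ (fun x : Fin m → ℂ => sphY l x k) z) :=
    fderiv_pi hdiffY
  have hbr : ∀ k, bracket (sphY l) (sphW θ p) z k
      = fderiv ℝ (fun x : Fin m → ℂ => sphW θ p x k) z (sphY l z)
        - fderiv ℝ (fun x : Fin m → ℂ => sphY l x k) z (sphW θ p z) := by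
    intro k
    simp [bracket, hW, hY]
  -- coordinates of v = sphY l z and w = sphW θ p z
  have hvlt : ∀ j : Fin m, (j:ℕ) < (l:ℕ) → sphY l z j = 0 := by
    intro j h; simp [sphY, h]
  have hvl : sphY l z l = -(((∑ j ∈ S, ‖z j‖ ^ 2 : ℝ) : ℂ)) * z l := by
    simp [sphY, hS]
  have hvgt : ∀ j : Fin m, (l:ℕ) < (j:ℕ) → sphY l z j = ((‖z l‖ ^ 2 : ℝ) : ℂ) * z j := by
    intro j h
    have h1 : ¬ ((j:ℕ) < (l:ℕ)) := by omega
    have h2 : ¬ (j = l) := by intro e; subst e; omega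
    simp [sphY, h1, h2]
  have hwlt : ∀ j : Fin m, (j:ℕ) < (p:ℕ) → sphW θ p z j = 0 := by
    intro j h; simp [sphW, h]
  have hwp : sphW θ p z p
      = -(((∑ j ∈ Sp, (θ j) ^ 2 * ‖z j‖ ^ 2 : ℝ) : ℂ)) * (Complex.I * z p) := by
    simp [sphW, hSp]
  have hwgt : ∀ j : Fin m, (p:ℕ) < (j:ℕ) →
      sphW θ p z j = (((θ p) * (θ j) * ‖z p‖ ^ 2 : ℝ) : ℂ) * (Complex.I * z j) := by
    intro j h
    have h1 : ¬ ((j:ℕ) < (p:ℕ)) := by omega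
    have h2 : ¬ (j = p) := by intro e; subst e; omega
    simp [sphW, h1, h2]
  -- the quadratic derivative of ‖z j‖² vanishes along w
  have hdw : ∀ j : Fin m, z j * conj (sphW θ p z j) + conj (z j) * sphW θ p z j = 0 := by
    intro j
    rcases lt_trichotomy (j:ℕ) (p:ℕ) with h|h|h
    · rw [hwlt j h]; simp
    · have hj : j = p := Fin.ext h
      subst hj
      rw [hwp]
      simp only [map_mul, map_neg, Complex.conj_ofReal, Complex.conj_I]
      ring
    · rw [hwgt j h]
      simp only [map_mul, Complex.conj_ofReal, Complex.conj_I]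
      ring
  -- all components of the bracket vanish except at p
  have hB0 : ∀ k : Fin m, k ≠ p → bracket (sphY l) (sphW θ p) z k = 0 := by
    intro k hk
    rw [hbr k]
    rcases lt_trichotomy (k:ℕ) (l:ℕ) with h|h|h
    · rw [sphY_lt l h, fderiv_fun_const]
      rcases lt_trichotomy (k:ℕ) (p:ℕ) with h2|h2|h2
      · rw [sphW_lt θ p h2, fderiv_fun_const]; simp
      · exact absurd (Fin.ext h2) hk
      · rw [sphW_gt θ p h2, fderiv_W_apply_gt, hvlt k h, hvlt p hpl']
        simp
    · have hkl : k = l := Fin.ext h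
      subst hkl
      rw [sphY_eq, sphW_gt θ p hpl', fderiv_W_apply_gt, fderiv_Y_apply_l,
        hvlt p hpl', hvl, hwgt k hpl']
      rw [Finset.sum_eq_zero (fun j _ => hdw j)]
      simp only [map_mul, map_neg, map_zero, Complex.conj_ofReal, ← hS]
      ring
    · have hpk : (p:ℕ) < (k:ℕ) := by omega
      rw [sphY_gt l h, sphW_gt θ p hpk, fderiv_W_apply_gt, fderiv_Y_apply_gt,
        hvlt p hpl', hvgt k h, hdw l, hwgt k hpk]
      simp only [map_zero]
      ring
  -- the p-component of the bracket
  have hBp : bracket (sphY l) (sphW θ p) z p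
      = ((2 * ‖z l‖ ^ 2 * (∑ j ∈ S, ((θ l) ^ 2 - (θ j) ^ 2) * ‖z j‖ ^ 2) : ℝ) : ℂ)
          * (Complex.I * z p) := by
    rw [hbr p, sphY_lt l hpl', fderiv_fun_const, sphW_eq, fderiv_W_apply_p, hvlt p hpl']
    simp only [mul_zero, Pi.zero_apply, ContinuousLinearMap.zero_apply, sub_zero, zero_add]
    have hlS : l ∉ S := by simp [hS]
    have hsub : insert l S ⊆ Sp := by
      intro x hx
      rcases Finset.mem_insert.1 hx with h|h
      · subst h; simp [hSp]; omega
      · simp [hS] at h; simp [hSp]; omega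
    have hvan : ∀ x ∈ Sp, x ∉ insert l S →
        ((θ x ^ 2 : ℝ) : ℂ) * (z x * conj (sphY l z x) + conj (z x) * sphY l z x) = 0 := by
      intro x hx hx'
      have h1 : ¬ (x = l) := fun e => hx' (by simp [e])
      have h2 : ¬ ((l:ℕ) < (x:ℕ)) := by
        intro e
        exact hx' (Finset.mem_insert.2 (Or.inr (by rw [hS]; simp; exact e)))
      have h3 : (x:ℕ) < (l:ℕ) := by
        rcases lt_trichotomy (x:ℕ) (l:ℕ) with h|h|h
        · exact h
        · exact absurd (Fin.ext h) h1
        · exact absurd h h2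
      rw [hvlt x h3]
      simp
    rw [← Finset.sum_subset hsub hvan, Finset.sum_insert hlS]
    have hTl : ((θ l ^ 2 : ℝ) : ℂ) * (z l * conj (sphY l z l) + conj (z l) * sphY l z l)
        = ((θ l ^ 2 * (-(2 * ‖z l‖ ^ 2 * (∑ j ∈ S, ‖z j‖ ^ 2))) : ℝ) : ℂ) := by
      rw [hvl]
      simp only [map_mul, map_neg, Complex.conj_ofReal]
      push_cast
      linear_combination (-(2:ℂ) * (θ l : ℂ)^2 * ((∑ j ∈ S, (‖z j‖:ℂ) ^ 2))) * mul_conj_norm (z l)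
    have hSsum : (∑ j ∈ S, ((θ j ^ 2 : ℝ) : ℂ) * (z j * conj (sphY l z j) + conj (z j) * sphY l z j))
        = ((∑ j ∈ S, θ j ^ 2 * (2 * ‖z l‖ ^ 2 * ‖z j‖ ^ 2) : ℝ) : ℂ) := by
      rw [Complex.ofReal_sum]
      refine Finset.sum_congr rfl fun j hj => ?_
      have hlj : (l:ℕ) < (j:ℕ) := by
        rw [hS] at hj; simpa using hj
      rw [hvgt j hlj]
      simp only [map_mul, Complex.conj_ofReal]
      push_cast
      linear_combination ((2:ℂ) * (θ j : ℂ)^2 * ((‖z l‖:ℂ) ^ 2)) * mul_conj_norm (z j)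
    rw [hTl, hSsum, ← Complex.ofReal_add, ← Complex.ofReal_neg]
    have hreal : -(θ l ^ 2 * (-(2 * ‖z l‖ ^ 2 * (∑ j ∈ S, ‖z j‖ ^ 2)))
          + (∑ j ∈ S, θ j ^ 2 * (2 * ‖z l‖ ^ 2 * ‖z j‖ ^ 2)))
        = 2 * ‖z l‖ ^ 2 * (∑ j ∈ S, (θ l ^ 2 - θ j ^ 2) * ‖z j‖ ^ 2) := by
      have e2 : θ l ^ 2 * (2 * ‖z l‖ ^ 2 * (∑ j ∈ S, ‖z j‖ ^ 2))
          = ∑ j ∈ S, θ l ^ 2 * (2 * ‖z l‖ ^ 2 * ‖z j‖ ^ 2) := by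
        rw [Finset.mul_sum, Finset.mul_sum]
      have e3 : 2 * ‖z l‖ ^ 2 * (∑ j ∈ S, (θ l ^ 2 - θ j ^ 2) * ‖z j‖ ^ 2)
          = ∑ j ∈ S, (θ l ^ 2 * (2 * ‖z l‖ ^ 2 * ‖z j‖ ^ 2)
              - θ j ^ 2 * (2 * ‖z l‖ ^ 2 * ‖z j‖ ^ 2)) := by
        rw [Finset.mul_sum]
        exact Finset.sum_congr rfl fun j _ => by ring
      rw [e3, Finset.sum_sub_distrib, ← e2]
      ring
    rw [hreal]
    ring
  -- final computation of the inner product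
  have hsum1 : (∑ k : Fin m, bracket (sphY l) (sphW θ p) z k * conj (sphX θ z k))
      = bracket (sphY l) (sphW θ p) z p * conj (sphX θ z p) := by
    refine Finset.sum_eq_single p (fun k _ hk => by rw [hB0 k hk, zero_mul]) ?_
    intro h; exact absurd (Finset.mem_univ p) h
  rw [rinner, hsum1, hBp]
  have hX : sphX θ z p = Complex.I * ((θ p : ℝ) : ℂ) * z p := rfl
  rw [hX]
  have hfin : ((2 * ‖z l‖ ^ 2 * (∑ j ∈ S, (θ l ^ 2 - θ j ^ 2) * ‖z j‖ ^ 2) : ℝ) : ℂ)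
        * (Complex.I * z p) * conj (Complex.I * ((θ p : ℝ) : ℂ) * z p)
      = ((2 * ‖z l‖ ^ 2 * (∑ j ∈ S, (θ l ^ 2 - θ j ^ 2) * ‖z j‖ ^ 2)
          * (θ p * ‖z p‖ ^ 2) : ℝ) : ℂ) := by
    simp only [map_mul, Complex.conj_I, Complex.conj_ofReal]
    push_cast
    set C : ℂ := ((2:ℂ) * (‖z l‖:ℂ) ^ 2 * (∑ j ∈ S, (((θ l : ℂ)) ^ 2 - ((θ j : ℂ)) ^ 2) * (‖z j‖:ℂ) ^ 2))
    linear_combination (-(C * (θ p : ℂ)) * (z p * conj (z p))) * Complex.I_sq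
      + (C * (θ p : ℂ)) * mul_conj_norm (z p)
  rw [hfin, Complex.ofReal_re]
  ring
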